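/- For every real s > 1 there exists a constant c > 0 (depending only on s) such that for all real t > 1 one has Q_{s−1}(t) ≥ c · t^(−s) · log((t+1)/(t−1)). -/

import Mathlib

open MeasureTheory

/-- The Legendre function of the second kind `Q_{s−1}(t)`, defined for `s > 1`, `t > 1` by
`Q_{s−1}(t) := ∫₀^∞ (t + √(t²−1)·cosh v)^(−s) dv`. -/
noncomputable def legendreQ (s t : ℝ) : ℝ :=
  ∫ v in Set.Ioi (0 : ℝ), (t + Real.sqrt (t ^ 2 - 1) * Real.cosh v) ^ (-s)

/-- For every real `s > 1` there exists a constant `c > 0` (depending only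
on `s`) such that for all real `t > 1` one has
`Q_{s−1}(t) ≥ c · t^(−s) · log((t+1)/(t−1))`. -/
theorem legendreQ_lower_bound (s : ℝ) (hs : 1 < s) :
    ∃ c : ℝ, 0 < c ∧ ∀ t : ℝ, 1 < t →
      c * t ^ (-s) * Real.log ((t + 1) / (t - 1)) ≤ legendreQ s t := by
  refine ⟨(3:ℝ) ^ (-s) / 2, by positivity, fun t ht => ?_⟩
  set a := Real.sqrt (t ^ 2 - 1) with ha
  have ht0 : (0:ℝ) < t := by linarith
  have ht2 : (0:ℝ) < t ^ 2 - 1 := by nlinarith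
  have ha0 : 0 < a := Real.sqrt_pos.2 ht2
  set V := Real.log ((t + 1) / (t - 1)) / 2 with hV
  have hfrac : 1 < (t + 1) / (t - 1) := by
    rw [lt_div_iff₀ (by linarith)]; linarith
  have hlogpos : 0 < Real.log ((t + 1) / (t - 1)) := Real.log_pos hfrac
  have hVpos : 0 < V := by positivity
  have hbase : ∀ v : ℝ, 0 < t + a * Real.cosh v := fun v => by
    have := Real.cosh_pos (x := v)
    nlinarith
  have hcont : Continuous fun v : ℝ => (t + a * Real.cosh v) ^ (-s) := by
    apply Continuous.rpow_const
    · exact continuous_const.add (continuous_const.mul Real.continuous_cosh)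
    · intro v; exact Or.inl (hbase v).ne'
  -- integrability on Ioi 0
  have hint : IntegrableOn (fun v => (t + a * Real.cosh v) ^ (-s)) (Set.Ioi 0) := by
    have hg : IntegrableOn (fun v => (a / 2) ^ (-s) * Real.exp (-s * v)) (Set.Ioi 0) :=
      (exp_neg_integrableOn_Ioi 0 (by linarith)).const_mul _
    refine Integrable.mono' hg hcont.aestronglyMeasurable ?_
    filter_upwards [ae_restrict_mem measurableSet_Ioi] with v hv
    have hv0 : (0:ℝ) ≤ v := le_of_lt hv
    rw [Real.norm_eq_abs, abs_of_nonneg (Real.rpow_nonneg (hbase v).le _)]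
    have hcosh : Real.exp v / 2 ≤ Real.cosh v := by
      rw [Real.cosh_eq]
      have := (Real.exp_pos (-v)).le
      linarith
    have h1 : a / 2 * Real.exp v ≤ t + a * Real.cosh v := by
      have := mul_le_mul_of_nonneg_left hcosh ha0.le
      nlinarith
    calc (t + a * Real.cosh v) ^ (-s)
        ≤ (a / 2 * Real.exp v) ^ (-s) :=
          Real.rpow_le_rpow_of_nonpos (by positivity) h1 (by linarith)
      _ = (a / 2) ^ (-s) * Real.exp (-s * v) := by
          rw [Real.mul_rpow (by positivity) (Real.exp_pos v).le, ← Real.exp_mul]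
          ring_nf
  -- key pointwise bound on Ioc 0 V
  have haV : a * Real.exp V ≤ t + 1 := by
    have hsq : (a * Real.exp V) ^ 2 = (t + 1) ^ 2 := by
      have hexp : Real.exp V ^ 2 = (t + 1) / (t - 1) := by
        rw [← Real.exp_nat_mul]
        push_cast
        rw [show (2:ℝ) * V = Real.log ((t + 1) / (t - 1)) by rw [hV]; ring]
        exact Real.exp_log (by linarith)
      have ha2 : a ^ 2 = t ^ 2 - 1 := Real.sq_sqrt ht2.le
      rw [mul_pow, ha2, hexp, mul_comm, div_mul_eq_mul_div,
        div_eq_iff (by linarith : t - 1 ≠ 0)]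
      ring
    nlinarith [Real.exp_pos V, mul_pos ha0 (Real.exp_pos V)]
  have hkey : ∀ v ∈ Set.Ioc (0:ℝ) V, (3 * t) ^ (-s) ≤ (t + a * Real.cosh v) ^ (-s) := by
    intro v hv
    apply Real.rpow_le_rpow_of_nonpos (hbase v) _ (by linarith)
    have hcosh : Real.cosh v ≤ Real.exp v := by
      rw [Real.cosh_eq]
      have : Real.exp (-v) ≤ Real.exp v := Real.exp_le_exp.2 (by linarith [hv.1.le])
      linarith
    have hev : Real.exp v ≤ Real.exp V := Real.exp_le_exp.2 hv.2
    have : a * Real.cosh v ≤ a * Real.exp V :=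
      le_trans (mul_le_mul_of_nonneg_left hcosh ha0.le)
        (mul_le_mul_of_nonneg_left hev ha0.le)
    nlinarith
  -- assemble
  have hstep1 : ∫ v in Set.Ioc (0:ℝ) V, (t + a * Real.cosh v) ^ (-s)
      ≤ ∫ v in Set.Ioi (0:ℝ), (t + a * Real.cosh v) ^ (-s) := by
    apply setIntegral_mono_set hint
    · filter_upwards with v using Real.rpow_nonneg (hbase v).le _
    · exact HasSubset.Subset.eventuallyLE Set.Ioc_subset_Ioi_self
  have hstep2 : (3 * t) ^ (-s) * V ≤
      ∫ v in Set.Ioc (0:ℝ) V, (t + a * Real.cosh v) ^ (-s) := by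
    have := setIntegral_ge_of_const_le (μ := volume) measurableSet_Ioc
      (by simp [Real.volume_Ioc] : volume (Set.Ioc (0:ℝ) V) ≠ ⊤) hkey
      (hint.mono_set Set.Ioc_subset_Ioi_self)
    simpa [Real.volume_Ioc, ENNReal.toReal_ofReal hVpos.le, max_eq_left hVpos.le, mul_comm] using this
  have hfinal : (3:ℝ) ^ (-s) / 2 * t ^ (-s) * Real.log ((t + 1) / (t - 1))
      = (3 * t) ^ (-s) * V := by
    rw [Real.mul_rpow (by norm_num) ht0.le, hV]
    ring
  rw [legendreQ, ← ha, hfinal]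
  exact le_trans hstep2 hstep1
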